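/- arXiv:2306.01758 — 2 statements merged into one kernel-verified Lean document; each statement's English description precedes it below -/
import Mathlib

section
/- For each a ∈ ℝ^∞, the translation map τ_a on complex measures of ℝ^∞, defined by (τ_a T)(E) := T({x : x + a ∈ E}), is a unitary operator on the Hilbert space CM(ℝ^∞). -/
open MeasureTheory Complex Filter Topology

noncomputable def sqDen {Ω : Type*} [MeasurableSpace Ω] (μ : Measure Ω) (f : Ω → ℂ) :
    ComplexMeasure Ω :=
  μ.withDensityᵥ (fun x => f x * ((‖f x‖ : ℝ) : ℂ))

structure CMSpace (Ω : Type*) [MeasurableSpace Ω] where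
  add : ComplexMeasure Ω → ComplexMeasure Ω → ComplexMeasure Ω
  smul : ℂ → ComplexMeasure Ω → ComplexMeasure Ω
  inner : ComplexMeasure Ω → ComplexMeasure Ω → ℂ
  add_repr : ∀ (μ : Measure Ω), SigmaFinite μ → ∀ f g : Ω → ℂ,
      MemLp f 2 μ → MemLp g 2 μ →
      add (sqDen μ f) (sqDen μ g) = sqDen μ (f + g)
  smul_repr : ∀ (μ : Measure Ω), SigmaFinite μ → ∀ (c : ℂ) (f : Ω → ℂ),
      MemLp f 2 μ → smul c (sqDen μ f) = sqDen μ (c • f)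
  inner_repr : ∀ (μ : Measure Ω), SigmaFinite μ → ∀ f g : Ω → ℂ,
      MemLp f 2 μ → MemLp g 2 μ →
      inner (sqDen μ f) (sqDen μ g) = ∫ x, f x * (starRingEnd ℂ) (g x) ∂μ
  add_assoc : ∀ u v w, add (add u v) w = add u (add v w)
  add_comm : ∀ u v, add u v = add v u
  add_zero : ∀ u, add u 0 = u
  neg_add : ∀ u, add (smul (-1) u) u = 0
  one_smul : ∀ u, smul 1 u = u
  mul_smul : ∀ c d u, smul (c * d) u = smul c (smul d u)
  smul_add : ∀ c u v, smul c (add u v) = add (smul c u) (smul c v)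
  add_smul : ∀ c d u, smul (c + d) u = add (smul c u) (smul d u)
  inner_conj_symm : ∀ u v, (starRingEnd ℂ) (inner u v) = inner v u
  inner_add_left : ∀ u v w, inner (add u v) w = inner u w + inner v w
  inner_smul_left : ∀ c u v, inner (smul c u) v = (starRingEnd ℂ) c * inner u v
  inner_self_nonneg : ∀ u, 0 ≤ (inner u u).re ∧ (inner u u).im = 0
  inner_self_eq_zero : ∀ u, inner u u = 0 → u = 0
  complete : ∀ u : ℕ → ComplexMeasure Ω,
    (∀ ε > 0, ∃ N, ∀ m ≥ N, ∀ n ≥ N,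
      Real.sqrt (inner (add (u m) (smul (-1) (u n))) (add (u m) (smul (-1) (u n)))).re < ε) →
    ∃ v, Tendsto
      (fun n => Real.sqrt (inner (add (u n) (smul (-1) v)) (add (u n) (smul (-1) v))).re)
      atTop (nhds 0)

noncomputable def CMSpace.nrm {Ω : Type*} [MeasurableSpace Ω] (C : CMSpace Ω)
    (u : ComplexMeasure Ω) : ℝ := Real.sqrt (C.inner u u).re

noncomputable def CMSpace.sub {Ω : Type*} [MeasurableSpace Ω] (C : CMSpace Ω)
    (u v : ComplexMeasure Ω) : ComplexMeasure Ω := C.add u (C.smul (-1) v)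


/-- Translation of a complex measure on ℝ^∞: (τ_a T)(E) = T {x | x + a ∈ E}. -/
noncomputable def cmTranslate (a : ℕ → ℝ) (T : ComplexMeasure (ℕ → ℝ)) :
    ComplexMeasure (ℕ → ℝ) :=
  T.map (fun x => x + a)

section Aux

variable {Ω : Type*} [MeasurableSpace Ω]

/-- square-root rescaling: `sqrtResc z * |sqrtResc z| = z`. -/
noncomputable def sqrtResc (z : ℂ) : ℂ := ((Real.sqrt (‖z‖))⁻¹ : ℝ) * z

lemma sqrtResc_spec (z : ℂ) : sqrtResc z * ((‖sqrtResc z‖ : ℝ) : ℂ) = z := by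
  rcases eq_or_ne z 0 with rfl | hz
  · simp [sqrtResc]
  · have hb : 0 < ‖z‖ := norm_pos_iff.mpr hz
    have hs : 0 < Real.sqrt (‖z‖) := Real.sqrt_pos.2 hb
    have habs : ‖sqrtResc z‖
        = (Real.sqrt (‖z‖))⁻¹ * ‖z‖ := by
      simp [sqrtResc, map_mul, _root_.abs_of_nonneg (le_of_lt (inv_pos.2 hs))]
    rw [habs, sqrtResc]
    push_cast
    have : ((Real.sqrt (‖z‖) : ℂ))⁻¹ * ((Real.sqrt (‖z‖) : ℂ))⁻¹
        * ((‖z‖ : ℝ) : ℂ) = 1 := by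
      rw [← mul_inv]
      norm_cast
      rw [Real.mul_self_sqrt hb.le]
      exact inv_mul_cancel₀ hb.ne'
    calc ((Real.sqrt (‖z‖) : ℂ))⁻¹ * z
          * (((Real.sqrt (‖z‖))⁻¹ : ℂ) * ((‖z‖ : ℝ) : ℂ))
        = z * (((Real.sqrt (‖z‖) : ℂ))⁻¹ * ((Real.sqrt (‖z‖) : ℂ))⁻¹
            * ((‖z‖ : ℝ) : ℂ)) := by ring
      _ = z := by rw [this, mul_one]

lemma sqrtResc_norm (z : ℂ) : ‖sqrtResc z‖ ^ 2 = ‖z‖ := by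
  rcases eq_or_ne z 0 with rfl | hz
  · simp [sqrtResc]
  · have hb : 0 < ‖z‖ := norm_pos_iff.mpr hz
    have hs : 0 < Real.sqrt (‖z‖) := Real.sqrt_pos.2 hb
    have : ‖sqrtResc z‖ = (Real.sqrt (‖z‖))⁻¹ * ‖z‖ := by
      simp [sqrtResc, map_mul, _root_.abs_of_nonneg (le_of_lt (inv_pos.2 hs))]
    rw [this]
    rw [mul_pow, ← Real.sqrt_inv, Real.sq_sqrt (inv_nonneg.2 hb.le), sq]
    field_simp

lemma measurable_sqrtResc : Measurable sqrtResc := by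
  unfold sqrtResc
  have h1 : Measurable fun z : ℂ => (Real.sqrt (‖z‖))⁻¹ :=
    ((Real.continuous_sqrt.comp continuous_norm).measurable).inv
  exact (Complex.measurable_ofReal.comp h1).mul measurable_id

/-- Given an integrable density `h`, the vector measure `μ.withDensityᵥ h` is a `sqDen`. -/
lemma exists_sqDen_of_withDensity (μ : Measure Ω) (h : Ω → ℂ) (hm : Measurable h)
    (hi : Integrable h μ) :
    ∃ f : Ω → ℂ, Measurable f ∧ MemLp f 2 μ ∧ sqDen μ f = μ.withDensityᵥ h := by
  have hfm : Measurable fun x => sqrtResc (h x) := measurable_sqrtResc.comp hm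
  refine ⟨fun x => sqrtResc (h x), hfm, ?_, ?_⟩
  · refine (memLp_two_iff_integrable_sq_norm hfm.aestronglyMeasurable).2 ?_
    have : (fun x => ‖sqrtResc (h x)‖ ^ 2) = fun x => ‖h x‖ := by
      funext x; exact sqrtResc_norm (h x)
    rw [this]
    exact hi.norm
  · unfold sqDen
    congr 1
    funext x
    exact sqrtResc_spec (h x)

/-- Every complex measure abs. continuous w.r.t. a σ-finite measure is `μ.withDensityᵥ`
of its Radon–Nikodym derivative. -/
lemma complex_withDensityᵥ_rnDeriv (T : ComplexMeasure Ω) (μ : Measure Ω) [SigmaFinite μ]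
    (hre : T.re.totalVariation ≪ μ) (him : T.im.totalVariation ≪ μ) :
    μ.withDensityᵥ (T.rnDeriv μ) = T := by
  have hre' : T.re ≪ᵥ μ.toENNRealVectorMeasure := by
    rw [SignedMeasure.absolutelyContinuous_ennreal_iff,
      VectorMeasure.ennrealToMeasure_toENNRealVectorMeasure]
    exact hre
  have him' : T.im ≪ᵥ μ.toENNRealVectorMeasure := by
    rw [SignedMeasure.absolutelyContinuous_ennreal_iff,
      VectorMeasure.ennrealToMeasure_toENNRealVectorMeasure]
    exact him
  have hInt := T.integrable_rnDeriv μ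
  ext E hE
  rw [withDensityᵥ_apply hInt hE]
  apply Complex.ext
  · rw [← RCLike.re_eq_complex_re, ← integral_re hInt.integrableOn, RCLike.re_eq_complex_re]
    have : (fun x => (T.rnDeriv μ x).re) = T.re.rnDeriv μ := rfl
    rw [this, ← withDensityᵥ_apply (SignedMeasure.integrable_rnDeriv _ _) hE,
      SignedMeasure.withDensityᵥ_rnDeriv_eq _ _ hre']
    rfl
  · rw [← RCLike.im_eq_complex_im, ← integral_im hInt.integrableOn, RCLike.im_eq_complex_im]
    have : (fun x => (T.rnDeriv μ x).im) = T.im.rnDeriv μ := rfl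
    rw [this, ← withDensityᵥ_apply (SignedMeasure.integrable_rnDeriv _ _) hE,
      SignedMeasure.withDensityᵥ_rnDeriv_eq _ _ him']
    rfl

lemma measurable_rnDeriv_c (T : ComplexMeasure Ω) (μ : Measure Ω) :
    Measurable (T.rnDeriv μ) := by
  have : T.rnDeriv μ = fun x => ((T.re.rnDeriv μ x : ℂ) + (T.im.rnDeriv μ x : ℂ) * Complex.I) := by
    funext x
    exact Complex.mk_eq_add_mul_I _ _
  rw [this]
  exact (Complex.measurable_ofReal.comp (T.re.measurable_rnDeriv μ)).add
    ((Complex.measurable_ofReal.comp (T.im.measurable_rnDeriv μ)).mul_const Complex.I)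

/-- Common representation of two complex measures. -/
lemma exists_common_repr (u v : ComplexMeasure Ω) :
    ∃ (μ : Measure Ω) (_ : IsFiniteMeasure μ) (f g : Ω → ℂ),
      Measurable f ∧ Measurable g ∧ MemLp f 2 μ ∧ MemLp g 2 μ ∧
      sqDen μ f = u ∧ sqDen μ g = v := by
  set μ : Measure Ω := u.re.totalVariation + u.im.totalVariation
      + (v.re.totalVariation + v.im.totalVariation) with hμ
  haveI hTV : ∀ s : SignedMeasure Ω, IsFiniteMeasure s.totalVariation := fun s => by
    unfold SignedMeasure.totalVariation
    infer_instance
  haveI h1 := hTV u.re; haveI h2 := hTV u.im; haveI h3 := hTV v.re; haveI h4 := hTV v.im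
  have hfin : IsFiniteMeasure μ := by rw [hμ]; infer_instance
  have key : ∀ T : ComplexMeasure Ω, T.re.totalVariation ≪ μ → T.im.totalVariation ≪ μ →
      ∃ f : Ω → ℂ, Measurable f ∧ MemLp f 2 μ ∧ sqDen μ f = T := by
    intro T h1 h2
    obtain ⟨f, hfm, hf2, hrepr⟩ := exists_sqDen_of_withDensity μ (T.rnDeriv μ)
      (measurable_rnDeriv_c T μ) (T.integrable_rnDeriv μ)
    exact ⟨f, hfm, hf2, by rw [hrepr, complex_withDensityᵥ_rnDeriv T μ h1 h2]⟩
  have hle : ∀ ν : Measure Ω, ν ≤ μ → ν ≪ μ := fun ν h => h.absolutelyContinuous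
  obtain ⟨f, hfm, hf2, hfr⟩ := key u
    (hle _ (by rw [hμ]; exact Measure.le_add_right (Measure.le_add_right le_rfl)))
    (hle _ (by rw [hμ]; exact Measure.le_add_right (Measure.le_add_left le_rfl)))
  obtain ⟨g, hgm, hg2, hgr⟩ := key v
    (hle _ (by rw [hμ]; exact Measure.le_add_left (Measure.le_add_right le_rfl)))
    (hle _ (by rw [hμ]; exact Measure.le_add_left (Measure.le_add_left le_rfl)))
  exact ⟨μ, hfin, f, g, hfm, hgm, hf2, hg2, hfr, hgr⟩

end Aux


section Trans

lemma measurable_addConst (a : ℕ → ℝ) : Measurable fun x : ℕ → ℝ => x + a :=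
  measurable_id.add_const a

/-- Translation as a measurable equivalence of `ℝ^∞`. -/
noncomputable def transEquiv (a : ℕ → ℝ) : (ℕ → ℝ) ≃ᵐ (ℕ → ℝ) where
  toFun x := x + a
  invFun x := x - a
  left_inv x := by simp
  right_inv x := by simp
  measurable_toFun := measurable_addConst a
  measurable_invFun := by
    simpa [sub_eq_add_neg] using measurable_addConst (-a)

lemma sqDen_integrable {Ω : Type*} [MeasurableSpace Ω] {μ : Measure Ω} {f : Ω → ℂ}
    (hf : Measurable f) (hf2 : MemLp f 2 μ) :
    Integrable (fun x => f x * ((‖f x‖ : ℝ) : ℂ)) μ := by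
  have hsq : Integrable (fun x => ‖f x‖ ^ 2) μ :=
    (memLp_two_iff_integrable_sq_norm hf.aestronglyMeasurable).1 hf2
  refine hsq.mono' ?_ ?_
  · exact (hf.mul (Complex.measurable_ofReal.comp
      (continuous_norm.measurable.comp hf))).aestronglyMeasurable
  · refine Filter.Eventually.of_forall fun x => le_of_eq ?_
    rw [norm_mul, Complex.norm_real, Real.norm_eq_abs,
      _root_.abs_of_nonneg (norm_nonneg _), sq]

lemma cmTranslate_sqDen (a : ℕ → ℝ) (μ : Measure (ℕ → ℝ)) {f : (ℕ → ℝ) → ℂ}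
    (hf : Measurable f) (hf2 : MemLp f 2 μ) :
    cmTranslate a (sqDen μ f) =
      sqDen (μ.map (transEquiv a)) (f ∘ (transEquiv a).symm) := by
  have hint : Integrable (fun x => f x * ((‖f x‖ : ℝ) : ℂ)) μ :=
    sqDen_integrable hf hf2
  have hfm' : Measurable (fun x => f x * ((‖f x‖ : ℝ) : ℂ)) :=
    hf.mul (Complex.measurable_ofReal.comp (continuous_norm.measurable.comp hf))
  have hint' : Integrable
      (fun x => (f ∘ (transEquiv a).symm) x
        * ((‖(f ∘ (transEquiv a).symm) x‖ : ℝ) : ℂ)) (μ.map (transEquiv a)) := by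
    rw [(transEquiv a).measurableEmbedding.integrable_map_iff]
    have : (fun x => (f ∘ (transEquiv a).symm) x
        * ((‖(f ∘ (transEquiv a).symm) x‖ : ℝ) : ℂ)) ∘ (transEquiv a)
        = fun x => f x * ((‖f x‖ : ℝ) : ℂ) := by
      funext x; simp
    rw [this]; exact hint
  ext E hE
  rw [cmTranslate]
  rw [VectorMeasure.map_apply _ (measurable_addConst a) hE]
  have hpre : (fun x : ℕ → ℝ => x + a) ⁻¹' E = (transEquiv a) ⁻¹' E := rfl
  rw [hpre, sqDen, sqDen, withDensityᵥ_apply hint (hE.preimage (transEquiv a).measurable),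
    withDensityᵥ_apply hint' hE,
    MeasureTheory.setIntegral_map hE hint'.aestronglyMeasurable
      (transEquiv a).measurable.aemeasurable]
  refine setIntegral_congr_fun (hE.preimage (transEquiv a).measurable) fun x _ => ?_
  simp

lemma memLp_comp_symm (a : ℕ → ℝ) (μ : Measure (ℕ → ℝ)) {f : (ℕ → ℝ) → ℂ}
    (hf2 : MemLp f 2 μ) : MemLp (f ∘ (transEquiv a).symm) 2 (μ.map (transEquiv a)) := by
  rw [(transEquiv a).memLp_map_measure_iff]
  have : (f ∘ (transEquiv a).symm) ∘ (transEquiv a) = f := by funext x; simp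
  rw [this]; exact hf2

end Trans

/-- for each a ∈ ℝ^∞ the translation τ_a, (τ_a T)(E) = T{x | x+a ∈ E},
is a unitary operator on the Hilbert space CM(ℝ^∞): it is linear, bijective, and
preserves the inner product. -/
theorem cmTranslate_unitary (C : CMSpace (ℕ → ℝ)) (a : ℕ → ℝ) :
    (∀ (T : ComplexMeasure (ℕ → ℝ)) (E : Set (ℕ → ℝ)), MeasurableSet E →
        cmTranslate a T E = T {x | x + a ∈ E}) ∧
    Function.Bijective (cmTranslate a) ∧
    (∀ u v, cmTranslate a (C.add u v) = C.add (cmTranslate a u) (cmTranslate a v)) ∧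
    (∀ (c : ℂ) u, cmTranslate a (C.smul c u) = C.smul c (cmTranslate a u)) ∧
    (∀ u v, C.inner (cmTranslate a u) (cmTranslate a v) = C.inner u v) := by
  refine ⟨?_, ?_, ?_, ?_, ?_⟩
  · intro T E hE
    exact VectorMeasure.map_apply _ (measurable_addConst a) hE
  · -- bijectivity
    have hinv : ∀ (b : ℕ → ℝ) (T : ComplexMeasure (ℕ → ℝ)),
        cmTranslate (-b) (cmTranslate b T) = T := by
      intro b T
      ext E hE
      rw [cmTranslate, cmTranslate,
        VectorMeasure.map_apply _ (measurable_addConst (-b)) hE,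
        VectorMeasure.map_apply _ (measurable_addConst b)
          (hE.preimage (measurable_addConst (-b)))]
      congr 1
      ext x
      simp
    refine Function.bijective_iff_has_inverse.2 ⟨cmTranslate (-a), fun T => hinv a T, fun T => ?_⟩
    have := hinv (-a) T
    rwa [neg_neg] at this
  · -- additivity
    intro u v
    obtain ⟨μ, hfin, f, g, hfm, hgm, hf2, hg2, hfr, hgr⟩ := exists_common_repr u v
    haveI := hfin
    haveI : IsFiniteMeasure (μ.map (transEquiv a)) :=
      ⟨by rw [Measure.map_apply (transEquiv a).measurable .univ]; exact measure_lt_top μ _⟩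
    rw [← hfr, ← hgr, C.add_repr μ inferInstance f g hf2 hg2,
      cmTranslate_sqDen a μ (f := f + g) (hfm.add hgm) (hf2.add hg2),
      cmTranslate_sqDen a μ hfm hf2, cmTranslate_sqDen a μ hgm hg2,
      C.add_repr (μ.map (transEquiv a)) inferInstance _ _
        (memLp_comp_symm a μ hf2) (memLp_comp_symm a μ hg2)]
    rfl
  · -- homogeneity
    intro c u
    obtain ⟨μ, hfin, f, g, hfm, hgm, hf2, hg2, hfr, hgr⟩ := exists_common_repr u u
    haveI := hfin
    haveI : IsFiniteMeasure (μ.map (transEquiv a)) :=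
      ⟨by rw [Measure.map_apply (transEquiv a).measurable .univ]; exact measure_lt_top μ _⟩
    rw [← hfr, C.smul_repr μ inferInstance c f hf2,
      cmTranslate_sqDen a μ (f := c • f) (hfm.const_smul c) (hf2.const_smul c),
      cmTranslate_sqDen a μ hfm hf2,
      C.smul_repr (μ.map (transEquiv a)) inferInstance c _ (memLp_comp_symm a μ hf2)]
    rfl
  · -- inner product
    intro u v
    obtain ⟨μ, hfin, f, g, hfm, hgm, hf2, hg2, hfr, hgr⟩ := exists_common_repr u v
    haveI := hfin
    haveI : IsFiniteMeasure (μ.map (transEquiv a)) :=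
      ⟨by rw [Measure.map_apply (transEquiv a).measurable .univ]; exact measure_lt_top μ _⟩
    rw [← hfr, ← hgr, cmTranslate_sqDen a μ hfm hf2, cmTranslate_sqDen a μ hgm hg2,
      C.inner_repr (μ.map (transEquiv a)) inferInstance _ _
        (memLp_comp_symm a μ hf2) (memLp_comp_symm a μ hg2),
      C.inner_repr μ inferInstance f g hf2 hg2]
    have hms : AEStronglyMeasurable
        (fun x => (f ∘ (transEquiv a).symm) x
          * (starRingEnd ℂ) ((g ∘ (transEquiv a).symm) x)) (μ.map (transEquiv a)) :=
      (((hfm.comp (transEquiv a).symm.measurable).mul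
        (Complex.continuous_conj.measurable.comp
          (hgm.comp (transEquiv a).symm.measurable))).aestronglyMeasurable)
    rw [MeasureTheory.integral_map (transEquiv a).measurable.aemeasurable hms]
    refine integral_congr_ae (Filter.Eventually.of_forall fun x => ?_)
    simp
end

section
/- For measurable spaces Ω₁, Ω₂ and complex measures u₁, v₁ on Ω₁ and u₂, v₂ on Ω₂, the product satisfies ⟨u₁·u₂, v₁·v₂⟩_{CM(Ω₁×Ω₂)} = ⟨u₁,v₁⟩_{CM(Ω₁)} · ⟨u₂,v₂⟩_{CM(Ω₂)}; in particular ‖u₁·u₂‖ = ‖u₁‖·‖u₂‖. -/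
open MeasureTheory Complex Filter Topology ENNReal

lemma memℒp_prod_mul {Ω₁ Ω₂ : Type*} [MeasurableSpace Ω₁] [MeasurableSpace Ω₂]
    {μ₁ : Measure Ω₁} {μ₂ : Measure Ω₂} [SFinite μ₂] {f₁ : Ω₁ → ℂ} {f₂ : Ω₂ → ℂ}
    (hf₁ : MemLp f₁ 2 μ₁) (hf₂ : MemLp f₂ 2 μ₂) :
    MemLp (fun p : Ω₁ × Ω₂ => f₁ p.1 * f₂ p.2) 2 (μ₁.prod μ₂) := by
  refine ⟨hf₁.1.comp_fst.mul hf₂.1.comp_snd, ?_⟩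
  rw [eLpNorm_eq_lintegral_rpow_enorm_toReal two_ne_zero ENNReal.ofNat_ne_top]
  have key : ∫⁻ p, (‖f₁ p.1 * f₂ p.2‖₊ : ℝ≥0∞) ^ (2 : ℝ≥0∞).toReal ∂μ₁.prod μ₂
      = (∫⁻ x, (‖f₁ x‖₊ : ℝ≥0∞) ^ (2 : ℝ≥0∞).toReal ∂μ₁) *
        ∫⁻ y, (‖f₂ y‖₊ : ℝ≥0∞) ^ (2 : ℝ≥0∞).toReal ∂μ₂ := by
    have h2 : (2 : ℝ≥0∞).toReal = ((2 : ℕ) : ℝ) := by simp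
    simp_rw [h2, ENNReal.rpow_natCast, nnnorm_mul, ENNReal.coe_mul, mul_pow]
    exact lintegral_prod_mul (hf₁.1.enorm.pow_const 2) (hf₂.1.enorm.pow_const 2)
  simp only [enorm_eq_nnnorm]
  rw [key]
  have h1 := hf₁.2
  have h2 := hf₂.2
  rw [eLpNorm_eq_lintegral_rpow_enorm_toReal two_ne_zero ENNReal.ofNat_ne_top] at h1 h2
  refine ENNReal.rpow_lt_top_of_nonneg (by positivity) ?_
  exact ENNReal.mul_ne_top
    (ENNReal.rpow_lt_top_iff_of_pos (by norm_num) |>.mp h1 |>.ne)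
    (ENNReal.rpow_lt_top_iff_of_pos (by norm_num) |>.mp h2 |>.ne)
lemma inner_prod_mul_eq {Ω₁ Ω₂ : Type*} [MeasurableSpace Ω₁] [MeasurableSpace Ω₂]
    (C₁ : CMSpace Ω₁) (C₂ : CMSpace Ω₂) (C : CMSpace (Ω₁ × Ω₂))
    (μ₁ : Measure Ω₁) (μ₂ : Measure Ω₂) [IsFiniteMeasure μ₁] [IsFiniteMeasure μ₂]
    (f₁ g₁ : Ω₁ → ℂ) (f₂ g₂ : Ω₂ → ℂ)
    (hf₁ : MemLp f₁ 2 μ₁) (hg₁ : MemLp g₁ 2 μ₁)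
    (hf₂ : MemLp f₂ 2 μ₂) (hg₂ : MemLp g₂ 2 μ₂) :
    C.inner (sqDen (μ₁.prod μ₂) (fun p => f₁ p.1 * f₂ p.2))
        (sqDen (μ₁.prod μ₂) (fun p => g₁ p.1 * g₂ p.2)) =
      C₁.inner (sqDen μ₁ f₁) (sqDen μ₁ g₁) * C₂.inner (sqDen μ₂ f₂) (sqDen μ₂ g₂) := by
  rw [C.inner_repr (μ₁.prod μ₂) inferInstance _ _ (memℒp_prod_mul hf₁ hf₂)
      (memℒp_prod_mul hg₁ hg₂),
    C₁.inner_repr μ₁ inferInstance _ _ hf₁ hg₁, C₂.inner_repr μ₂ inferInstance _ _ hf₂ hg₂,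
    ← integral_prod_mul (fun x => f₁ x * (starRingEnd ℂ) (g₁ x))
      (fun y => f₂ y * (starRingEnd ℂ) (g₂ y))]
  congr 1
  ext p
  simp only [map_mul]
  ring

/-- ⟨u₁·u₂, v₁·v₂⟩_{CM(Ω₁×Ω₂)} = ⟨u₁,v₁⟩_{CM(Ω₁)}·⟨u₂,v₂⟩_{CM(Ω₂)} and
‖u₁·u₂‖ = ‖u₁‖·‖u₂‖, where arbitrary complex measures are written in square-root-density
form uᵢ = fᵢ|fᵢ|dμᵢ, vᵢ = gᵢ|gᵢ|dμᵢ with μᵢ finite, and the product complex measure is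
(f₁|f₁|dμ₁)·(f₂|f₂|dμ₂) = (f₁f₂)|f₁f₂| d(μ₁×μ₂). -/
theorem inner_product_complex_measure_prod
    {Ω₁ Ω₂ : Type*} [MeasurableSpace Ω₁] [MeasurableSpace Ω₂]
    (C₁ : CMSpace Ω₁) (C₂ : CMSpace Ω₂) (C : CMSpace (Ω₁ × Ω₂))
    (μ₁ : Measure Ω₁) (μ₂ : Measure Ω₂) [IsFiniteMeasure μ₁] [IsFiniteMeasure μ₂]
    (f₁ g₁ : Ω₁ → ℂ) (f₂ g₂ : Ω₂ → ℂ)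
    (hf₁ : MemLp f₁ 2 μ₁) (hg₁ : MemLp g₁ 2 μ₁)
    (hf₂ : MemLp f₂ 2 μ₂) (hg₂ : MemLp g₂ 2 μ₂) :
    C.inner (sqDen (μ₁.prod μ₂) (fun p => f₁ p.1 * f₂ p.2))
        (sqDen (μ₁.prod μ₂) (fun p => g₁ p.1 * g₂ p.2)) =
      C₁.inner (sqDen μ₁ f₁) (sqDen μ₁ g₁) * C₂.inner (sqDen μ₂ f₂) (sqDen μ₂ g₂) ∧
    C.nrm (sqDen (μ₁.prod μ₂) (fun p => f₁ p.1 * f₂ p.2)) =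
      C₁.nrm (sqDen μ₁ f₁) * C₂.nrm (sqDen μ₂ f₂) := by
  refine ⟨inner_prod_mul_eq C₁ C₂ C μ₁ μ₂ f₁ g₁ f₂ g₂ hf₁ hg₁ hf₂ hg₂, ?_⟩
  obtain ⟨h1re, h1im⟩ := C₁.inner_self_nonneg (sqDen μ₁ f₁)
  obtain ⟨h2re, h2im⟩ := C₂.inner_self_nonneg (sqDen μ₂ f₂)
  unfold CMSpace.nrm
  rw [inner_prod_mul_eq C₁ C₂ C μ₁ μ₂ f₁ f₁ f₂ f₂ hf₁ hf₁ hf₂ hf₂, Complex.mul_re,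
    h1im, h2im, mul_zero, sub_zero, Real.sqrt_mul h1re]
end
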